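/- arXiv:1908.08944 — 9 statements merged into one kernel-verified Lean document; each statement's English description precedes it below -/
import Mathlib

section
/- Given a Grothendieck fibration p : C → B with stable fiberwise finite products and stable fiberwise exponentials, every cocartesian morphism in C satisfies Frobenius reciprocity: for a cocartesian lift t : P → Σ_f P of f : A → B, a cartesian lift c : f*Q → Q, and fiberwise product diagrams P ∧ f*Q and (Σ_f P) ∧ Q, the induced morphism t ∧ c : P ∧ f*Q → (Σ_f P) ∧ Q lying over f is again cocartesian. -/
open CategoryTheory CategoryTheory.Limits CategoryTheory.Functor

namespace FOHL

variable {𝒮 : Type*} {𝒳 : Type*} [Category 𝒮] [Category 𝒳]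

variable (p : 𝒳 ⥤ 𝒮)

/-- A binary product diagram in the fiber of `p` over `S`. -/
structure IsFiberProductFan (S : 𝒮) {P Q T : 𝒳} (π₁ : T ⟶ P) (π₂ : T ⟶ Q) : Prop where
  lift₁ : p.IsHomLift (𝟙 S) π₁
  lift₂ : p.IsHomLift (𝟙 S) π₂
  universal : ∀ {X : 𝒳} (u : X ⟶ P) (v : X ⟶ Q),
    p.IsHomLift (𝟙 S) u → p.IsHomLift (𝟙 S) v →
      ∃! w : X ⟶ T, p.IsHomLift (𝟙 S) w ∧ w ≫ π₁ = u ∧ w ≫ π₂ = v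

/-- A binary coproduct diagram in the fiber of `p` over `S`. -/
structure IsFiberCoproductCofan (S : 𝒮) {P Q T : 𝒳} (ι₁ : P ⟶ T) (ι₂ : Q ⟶ T) : Prop where
  lift₁ : p.IsHomLift (𝟙 S) ι₁
  lift₂ : p.IsHomLift (𝟙 S) ι₂
  universal : ∀ {X : 𝒳} (u : P ⟶ X) (v : Q ⟶ X),
    p.IsHomLift (𝟙 S) u → p.IsHomLift (𝟙 S) v →
      ∃! w : T ⟶ X, p.IsHomLift (𝟙 S) w ∧ ι₁ ≫ w = u ∧ ι₂ ≫ w = v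

/-- A terminal object of the fiber of `p` over `S`. -/
structure IsFiberTerminal (S : 𝒮) (T : 𝒳) : Prop where
  isOver : p.obj T = S
  universal : ∀ X : 𝒳, p.obj X = S → ∃! u : X ⟶ T, p.IsHomLift (𝟙 S) u

/-- An initial object of the fiber of `p` over `S`. -/
structure IsFiberInitial (S : 𝒮) (T : 𝒳) : Prop where
  isOver : p.obj T = S
  universal : ∀ X : 𝒳, p.obj X = S → ∃! u : T ⟶ X, p.IsHomLift (𝟙 S) u

/-- An exponential diagram in the fiber of `p` over `S`: `E` is the exponential `P ⟹ Q`,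
`π₁ : W ⟶ E`, `π₂ : W ⟶ P` is a product fan exhibiting `W = E ∧ P`, and `ev : W ⟶ Q` is the
evaluation morphism. -/
structure IsFiberExponential (S : 𝒮) {P Q E W : 𝒳}
    (π₁ : W ⟶ E) (π₂ : W ⟶ P) (ev : W ⟶ Q) : Prop where
  fan : IsFiberProductFan p S π₁ π₂
  ev_lift : p.IsHomLift (𝟙 S) ev
  universal : ∀ {X V : 𝒳} (ρ₁ : V ⟶ X) (ρ₂ : V ⟶ P), IsFiberProductFan p S ρ₁ ρ₂ →
    ∀ g : V ⟶ Q, p.IsHomLift (𝟙 S) g →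
      ∃! h : X ⟶ E, p.IsHomLift (𝟙 S) h ∧
        ∀ m : V ⟶ W, p.IsHomLift (𝟙 S) m → m ≫ π₁ = ρ₁ ≫ h → m ≫ π₂ = ρ₂ →
          m ≫ ev = g

/-- Stability of fiberwise binary product diagrams under pullback along `f`. -/
def ProductsStableAlong {R S : 𝒮} (f : R ⟶ S) : Prop :=
  ∀ {P Q T P' Q' T' : 𝒳} (π₁ : T ⟶ P) (π₂ : T ⟶ Q)
    (π₁' : T' ⟶ P') (π₂' : T' ⟶ Q') (cP : P' ⟶ P) (cQ : Q' ⟶ Q) (cT : T' ⟶ T),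
    IsFiberProductFan p S π₁ π₂ →
    p.IsStronglyCartesian f cP → p.IsStronglyCartesian f cQ → p.IsStronglyCartesian f cT →
    p.IsHomLift (𝟙 R) π₁' → p.IsHomLift (𝟙 R) π₂' →
    π₁' ≫ cP = cT ≫ π₁ → π₂' ≫ cQ = cT ≫ π₂ →
    IsFiberProductFan p R π₁' π₂'

/-- Stability of fiberwise binary coproduct diagrams under pullback along `f`. -/
def CoproductsStableAlong {R S : 𝒮} (f : R ⟶ S) : Prop :=
  ∀ {P Q T P' Q' T' : 𝒳} (ι₁ : P ⟶ T) (ι₂ : Q ⟶ T)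
    (ι₁' : P' ⟶ T') (ι₂' : Q' ⟶ T') (cP : P' ⟶ P) (cQ : Q' ⟶ Q) (cT : T' ⟶ T),
    IsFiberCoproductCofan p S ι₁ ι₂ →
    p.IsStronglyCartesian f cP → p.IsStronglyCartesian f cQ → p.IsStronglyCartesian f cT →
    p.IsHomLift (𝟙 R) ι₁' → p.IsHomLift (𝟙 R) ι₂' →
    ι₁' ≫ cT = cP ≫ ι₁ → ι₂' ≫ cT = cQ ≫ ι₂ →
    IsFiberCoproductCofan p R ι₁' ι₂'

/-- Stability of fiberwise exponential diagrams under pullback along `f`. -/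
def ExponentialsStableAlong {R S : 𝒮} (f : R ⟶ S) : Prop :=
  ∀ {P Q E W P' Q' E' W' : 𝒳} (π₁ : W ⟶ E) (π₂ : W ⟶ P) (ev : W ⟶ Q)
    (π₁' : W' ⟶ E') (π₂' : W' ⟶ P') (ev' : W' ⟶ Q')
    (cE : E' ⟶ E) (cP : P' ⟶ P) (cQ : Q' ⟶ Q) (cW : W' ⟶ W),
    IsFiberExponential p S π₁ π₂ ev →
    p.IsStronglyCartesian f cE → p.IsStronglyCartesian f cP →
    p.IsStronglyCartesian f cQ → p.IsStronglyCartesian f cW →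
    p.IsHomLift (𝟙 R) π₁' → p.IsHomLift (𝟙 R) π₂' → p.IsHomLift (𝟙 R) ev' →
    π₁' ≫ cE = cW ≫ π₁ → π₂' ≫ cP = cW ≫ π₂ → ev' ≫ cQ = cW ≫ ev →
    IsFiberExponential p R π₁' π₂' ev'

/-- A `Π`-diagram over `f : R ⟶ S` based on `P` (with `P` in the fiber over `R`): a cartesian
morphism `c : X ⟶ Y` over `f` (so `X = f*Y`, `Y = Π_f P`) and a vertical evaluation morphism
`ε : X ⟶ P` which is universal: for every cartesian `c' : X' ⟶ Y'` over `f` and vertical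
`u : X' ⟶ P` there is a unique vertical `v : Y' ⟶ Y` whose pullback composed with `ε` is `u`. -/
structure IsPiDiagram {R S : 𝒮} (f : R ⟶ S) {P X Y : 𝒳} (c : X ⟶ Y) (ε : X ⟶ P) : Prop where
  cart : p.IsStronglyCartesian f c
  vert : p.IsHomLift (𝟙 R) ε
  universal : ∀ {X' Y' : 𝒳} (c' : X' ⟶ Y'), p.IsStronglyCartesian f c' →
    ∀ u : X' ⟶ P, p.IsHomLift (𝟙 R) u →
      ∃! v : Y' ⟶ Y, p.IsHomLift (𝟙 S) v ∧
        ∀ w : X' ⟶ X, p.IsHomLift (𝟙 R) w → w ≫ c = c' ≫ v → w ≫ ε = u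

/-- The Beck–Chevalley condition: stability of a `Π`-diagram over `g : Cc ⟶ D` along
`k : Bb ⟶ D`.  For every pullback square and every pullback of the diagram along the square,
the resulting diagram is again a `Π`-diagram. -/
def PiDiagramStableAlong {Cc D : 𝒮} (g : Cc ⟶ D) {P X Y : 𝒳} (c : X ⟶ Y) (ε : X ⟶ P)
    {Bb : 𝒮} (k : Bb ⟶ D) : Prop :=
  ∀ {A : 𝒮} (f : A ⟶ Bb) (h : A ⟶ Cc), IsPullback f h k g →
    ∀ {P' X' Y' : 𝒳} (cP : P' ⟶ P) (cX : X' ⟶ X) (cY : Y' ⟶ Y)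
      (q : X' ⟶ Y') (ε' : X' ⟶ P'),
      p.IsStronglyCartesian h cP → p.IsStronglyCartesian h cX → p.IsStronglyCartesian k cY →
      p.IsHomLift f q → q ≫ cY = cX ≫ c →
      p.IsHomLift (𝟙 A) ε' → ε' ≫ cP = cX ≫ ε →
      IsPiDiagram p f q ε'

/-- Stability of a cocartesian lift `t : P ⟶ Z` of `g : Cc ⟶ D` along `k : Bb ⟶ D`:
for every pullback square, the induced comparison morphism between the pullbacks is again
cocartesian. -/
def CocartesianStableAlong {Cc D : 𝒮} (g : Cc ⟶ D) {P Z : 𝒳} (t : P ⟶ Z)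
    {Bb : 𝒮} (k : Bb ⟶ D) : Prop :=
  ∀ {A : 𝒮} (f : A ⟶ Bb) (h : A ⟶ Cc), IsPullback f h k g →
    ∀ {P' Z' : 𝒳} (cP : P' ⟶ P) (cZ : Z' ⟶ Z) (m : P' ⟶ Z'),
      p.IsStronglyCartesian h cP → p.IsStronglyCartesian k cZ →
      p.IsHomLift f m → m ≫ cZ = cP ≫ t →
      p.IsStronglyCocartesian f m

end FOHL

open CategoryTheory CategoryTheory.Functor FOHL

/-- In a Grothendieck fibration `p : 𝒳 ⥤ 𝒮` with stable fiberwise finite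
products and stable fiberwise exponentials, every cocartesian morphism satisfies Frobenius
reciprocity: given a cocartesian lift `t : P ⟶ SfP` of `f : R ⟶ S`, a cartesian lift
`c : Qf ⟶ Q` of `f`, fiberwise product diagrams `P ∧ f*Q` and `(Σ_f P) ∧ Q`, the induced
morphism `t ∧ c : P ∧ f*Q ⟶ (Σ_f P) ∧ Q` lying over `f` is again cocartesian. -/
theorem frobenius_of_stable_products_and_exponentials
    {𝒮 𝒳 : Type*} [Category 𝒮] [Category 𝒳] (p : 𝒳 ⥤ 𝒮) [p.IsFibered]
    (hterm : ∀ S : 𝒮, ∃ T, IsFiberTerminal p S T)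
    (hprod : ∀ (S : 𝒮) (P Q : 𝒳), p.obj P = S → p.obj Q = S →
      ∃ (T : 𝒳) (π₁ : T ⟶ P) (π₂ : T ⟶ Q), IsFiberProductFan p S π₁ π₂)
    (hprodStable : ∀ {R S : 𝒮} (f : R ⟶ S), ProductsStableAlong p f)
    (hexp : ∀ (S : 𝒮) (P Q : 𝒳), p.obj P = S → p.obj Q = S →
      ∃ (E W : 𝒳) (π₁ : W ⟶ E) (π₂ : W ⟶ P) (ev : W ⟶ Q), IsFiberExponential p S π₁ π₂ ev)
    (hexpStable : ∀ {R S : 𝒮} (f : R ⟶ S), ExponentialsStableAlong p f)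
    {R S : 𝒮} (f : R ⟶ S) {P SfP : 𝒳} (t : P ⟶ SfP) (ht : p.IsStronglyCocartesian f t)
    {Q Qf T T' : 𝒳} (c : Qf ⟶ Q) (hc : p.IsStronglyCartesian f c)
    (π₁ : T ⟶ P) (π₂ : T ⟶ Qf) (hT : IsFiberProductFan p R π₁ π₂)
    (ρ₁ : T' ⟶ SfP) (ρ₂ : T' ⟶ Q) (hT' : IsFiberProductFan p S ρ₁ ρ₂)
    (m : T ⟶ T') (hm : p.IsHomLift f m)
    (hm₁ : m ≫ ρ₁ = π₁ ≫ t) (hm₂ : m ≫ ρ₂ = π₂ ≫ c) :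
    p.IsStronglyCocartesian f m := by
  haveI := ht
  haveI := hc
  haveI := hm
  haveI := hT.lift₁
  haveI := hT.lift₂
  haveI := hT'.lift₁
  haveI := hT'.lift₂
  have hQS : p.obj Q = S := IsHomLift.codomain_eq p (𝟙 S) ρ₂
  -- Key fiberwise statement: for any Y in the fiber over S, morphisms T ⟶ Y over f factor
  -- uniquely through m via a vertical morphism T' ⟶ Y.
  have key : ∀ (Y : 𝒳), p.obj Y = S → ∀ (φb : T ⟶ Y), p.IsHomLift f φb →
      ∃! ψ : T' ⟶ Y, p.IsHomLift (𝟙 S) ψ ∧ m ≫ ψ = φb := by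
    intro Y hY φb hφb
    haveI := hφb
    -- exponential (Q ⟹ Y) in the fiber over S
    obtain ⟨E, W, πE, πQ, ev, hE⟩ := hexp S Q Y hQS hY
    haveI := hE.fan.lift₁
    haveI := hE.fan.lift₂
    haveI := hE.ev_lift
    -- cartesian lifts over f of E, W, Y
    obtain ⟨E', cE, hcE⟩ :=
      IsPreFibered.exists_isCartesian p (IsHomLift.codomain_eq p (𝟙 S) πE) f
    haveI := hcE
    have hscE : p.IsStronglyCartesian f cE := inferInstance
    obtain ⟨W', cW, hcW⟩ :=
      IsPreFibered.exists_isCartesian p (IsHomLift.domain_eq p (𝟙 S) πE) f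
    haveI := hcW
    have hscW : p.IsStronglyCartesian f cW := inferInstance
    obtain ⟨Y', cY, hcY⟩ := IsPreFibered.exists_isCartesian p hY f
    haveI := hcY
    have hscY : p.IsStronglyCartesian f cY := inferInstance
    -- induced vertical structure maps on the pullbacks
    let π₁' : W' ⟶ E' := IsStronglyCartesian.map p f cE (Category.id_comp f).symm (cW ≫ πE)
    haveI hπ₁' : p.IsHomLift (𝟙 R) π₁' := IsStronglyCartesian.map_isHomLift p f cE _ _
    have fac₁ : π₁' ≫ cE = cW ≫ πE := IsStronglyCartesian.fac p f cE _ _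
    let π₂' : W' ⟶ Qf := IsStronglyCartesian.map p f c (Category.id_comp f).symm (cW ≫ πQ)
    haveI hπ₂' : p.IsHomLift (𝟙 R) π₂' := IsStronglyCartesian.map_isHomLift p f c _ _
    have fac₂ : π₂' ≫ c = cW ≫ πQ := IsStronglyCartesian.fac p f c _ _
    let ev' : W' ⟶ Y' := IsStronglyCartesian.map p f cY (Category.id_comp f).symm (cW ≫ ev)
    haveI hev' : p.IsHomLift (𝟙 R) ev' := IsStronglyCartesian.map_isHomLift p f cY _ _
    have fac₃ : ev' ≫ cY = cW ≫ ev := IsStronglyCartesian.fac p f cY _ _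
    -- the pullback exponential over R
    have hE' : IsFiberExponential p R π₁' π₂' ev' :=
      hexpStable f πE πQ ev π₁' π₂' ev' cE c cY cW hE hscE hc hscY hscW hπ₁' hπ₂' hev'
        fac₁ fac₂ fac₃
    -- factor φb through cY
    let φ₀ : T ⟶ Y' := IsStronglyCartesian.map p f cY (Category.id_comp f).symm φb
    haveI hφ₀ : p.IsHomLift (𝟙 R) φ₀ := IsStronglyCartesian.map_isHomLift p f cY _ _
    have facφ₀ : φ₀ ≫ cY = φb := IsStronglyCartesian.fac p f cY _ _
    -- exponential transpose over R
    obtain ⟨h', ⟨h'lift, h'prop⟩, h'uniq⟩ := hE'.universal π₁ π₂ hT φ₀ hφ₀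
    haveI := h'lift
    -- push forward along the cocartesian t
    let hhat : SfP ⟶ E := IsStronglyCocartesian.map p f t (Category.comp_id f).symm (h' ≫ cE)
    haveI hhatlift : p.IsHomLift (𝟙 S) hhat := IsStronglyCocartesian.map_isHomLift p f t _ _
    have fachhat : t ≫ hhat = h' ≫ cE := IsStronglyCocartesian.fac p f t _ _
    -- compatibility: component comparison lemma
    have compat : ∀ (a : P ⟶ E') (g' : SfP ⟶ E) (k' : T' ⟶ W) (n : T ⟶ W'),
        p.IsHomLift (𝟙 R) a → p.IsHomLift (𝟙 S) g' → p.IsHomLift (𝟙 S) k' →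
        p.IsHomLift (𝟙 R) n →
        t ≫ g' = a ≫ cE → k' ≫ πE = ρ₁ ≫ g' → k' ≫ πQ = ρ₂ →
        n ≫ π₁' = π₁ ≫ a → n ≫ π₂' = π₂ →
        n ≫ cW = m ≫ k' := by
      intro a g' k' n ha hg' hk' hn hag' hk'1 hk'2 hn1 hn2
      haveI := ha; haveI := hg'; haveI := hk'; haveI := hn
      let n₂ : T ⟶ W' := IsStronglyCartesian.map p f cW (Category.id_comp f).symm (m ≫ k')
      haveI hn₂ : p.IsHomLift (𝟙 R) n₂ := IsStronglyCartesian.map_isHomLift p f cW _ _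
      have facn₂ : n₂ ≫ cW = m ≫ k' := IsStronglyCartesian.fac p f cW _ _
      have e₁ : n₂ ≫ π₁' = π₁ ≫ a := by
        apply IsStronglyCartesian.ext p f cE (𝟙 R)
        rw [Category.assoc, fac₁, ← Category.assoc, facn₂, Category.assoc, hk'1,
          ← Category.assoc, hm₁, Category.assoc, hag', ← Category.assoc, Category.assoc]
      have e₂ : n₂ ≫ π₂' = π₂ := by
        apply IsStronglyCartesian.ext p f c (𝟙 R)
        rw [Category.assoc, fac₂, ← Category.assoc, facn₂, Category.assoc, hk'2, hm₂]
      obtain ⟨n₀, hn₀, n₀uniq⟩ := hE'.fan.universal (π₁ ≫ a) π₂ inferInstance inferInstance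
      have hne : n = n₂ := by
        rw [n₀uniq n ⟨hn, hn1, hn2⟩, n₀uniq n₂ ⟨hn₂, e₁, e₂⟩]
      rw [hne, facn₂]
    -- the pairing ⟨ρ₁ ≫ hhat, ρ₂⟩ : T' ⟶ W
    obtain ⟨k, ⟨klift, k1, k2⟩, kuniq⟩ :=
      hE.fan.universal (ρ₁ ≫ hhat) ρ₂ inferInstance inferInstance
    haveI := klift
    refine ⟨k ≫ ev, ⟨inferInstance, ?_⟩, ?_⟩
    · -- existence
      obtain ⟨n, ⟨nlift, n1, n2⟩, _⟩ := hE'.fan.universal (π₁ ≫ h') π₂ inferInstance inferInstance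
      haveI := nlift
      have hnc : n ≫ cW = m ≫ k := compat h' hhat k n h'lift hhatlift klift nlift
        fachhat k1 k2 n1 n2
      have hnev : n ≫ ev' = φ₀ := h'prop n nlift n1 n2
      calc m ≫ k ≫ ev = (m ≫ k) ≫ ev := by rw [Category.assoc]
        _ = (n ≫ cW) ≫ ev := by rw [hnc]
        _ = n ≫ ev' ≫ cY := by rw [Category.assoc, ← fac₃]
        _ = φ₀ ≫ cY := by rw [← Category.assoc, hnev]
        _ = φb := facφ₀
    · -- uniqueness
      rintro ψ' ⟨ψ'lift, ψ'fac⟩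
      haveI := ψ'lift
      obtain ⟨g', ⟨g'lift, g'prop⟩, g'uniq⟩ := hE.universal ρ₁ ρ₂ hT' ψ' ψ'lift
      haveI := g'lift
      obtain ⟨k', ⟨k'lift, k'1, k'2⟩, _⟩ :=
        hE.fan.universal (ρ₁ ≫ g') ρ₂ inferInstance inferInstance
      haveI := k'lift
      have k'ev : k' ≫ ev = ψ' := g'prop k' k'lift k'1 k'2
      let a : P ⟶ E' := IsStronglyCartesian.map p f cE (Category.id_comp f).symm (t ≫ g')
      haveI halift : p.IsHomLift (𝟙 R) a := IsStronglyCartesian.map_isHomLift p f cE _ _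
      have faca : a ≫ cE = t ≫ g' := IsStronglyCartesian.fac p f cE _ _
      have aprop : ∀ n : T ⟶ W', p.IsHomLift (𝟙 R) n → n ≫ π₁' = π₁ ≫ a → n ≫ π₂' = π₂ →
          n ≫ ev' = φ₀ := by
        intro n nlift n1 n2
        haveI := nlift
        have hnc : n ≫ cW = m ≫ k' := compat a g' k' n halift g'lift k'lift nlift
          faca.symm k'1 k'2 n1 n2
        apply IsStronglyCartesian.ext p f cY (𝟙 R)
        rw [Category.assoc, fac₃, ← Category.assoc, hnc, Category.assoc, k'ev, ψ'fac, facφ₀]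
      have ha' : a = h' := h'uniq a ⟨halift, aprop⟩
      have hgh : g' = hhat := by
        apply IsStronglyCocartesian.ext p f t (𝟙 S)
        rw [fachhat, ← ha', faca]
      have hkk : k' = k := kuniq k' ⟨k'lift, by rw [k'1, hgh], k'2⟩
      rw [← k'ev, hkk]
  -- Deduce strong cocartesianness from the key statement.
  refine ⟨?_⟩
  intro b' g φ' hφ'
  haveI := hφ'
  obtain ⟨Yb, χY, hχY⟩ := IsPreFibered.exists_isCartesian p rfl g
  haveI := hχY
  have hsχY : p.IsStronglyCartesian g χY := inferInstance
  have hYbS : p.obj Yb = S := IsHomLift.domain_eq p g χY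
  let φb : T ⟶ Yb := IsStronglyCartesian.map p g χY (rfl : f ≫ g = f ≫ g) φ'
  haveI hφb : p.IsHomLift f φb := IsStronglyCartesian.map_isHomLift p g χY _ _
  have facφb : φb ≫ χY = φ' := IsStronglyCartesian.fac p g χY _ _
  obtain ⟨ψ, ⟨ψlift, ψfac⟩, ψuniq⟩ := key Yb hYbS φb hφb
  haveI := ψlift
  refine ⟨ψ ≫ χY, ⟨inferInstance, by rw [← Category.assoc, ψfac, facφb]⟩, ?_⟩
  rintro χ'' ⟨χ''lift, χ''fac⟩
  haveI := χ''lift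
  let ψ'' : T' ⟶ Yb := IsStronglyCartesian.map p g χY (Category.id_comp g).symm χ''
  haveI hψ'' : p.IsHomLift (𝟙 S) ψ'' := IsStronglyCartesian.map_isHomLift p g χY _ _
  have facψ'' : ψ'' ≫ χY = χ'' := IsStronglyCartesian.fac p g χY _ _
  have hmψ'' : m ≫ ψ'' = φb := by
    apply IsStronglyCartesian.ext p g χY f
    rw [Category.assoc, facψ'', χ''fac, facφb]
  have := ψuniq ψ'' ⟨hψ'', hmψ''⟩
  rw [← facψ'', this]
end

section
/- In a cartesian closed category C with terminal object ⊤, fix an object A, an object (X, x : X → A) of the slice C/A, and an object Y. Then the diagram exhibiting Y as Π along the unique map A → ⊤ applied to (X,x) — via a map p : Y × A → X over A — is a Π-diagram if and only if the square with vertices Y, X^A, ⊤, A^A, where Y → X^A is the transpose of p, ⊤ → A^A is the name of the identity on A, and X^A → A^A is x^A, is a pullback square. In other words, the right adjoint to pullback along A → ⊤ is computed as the object of sections of x. -/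
open CategoryTheory CategoryTheory.Limits MonoidalCategory CartesianClosed
open CartesianMonoidalCategory (fst snd toUnit)
open MonoidalClosed
attribute [local instance] BraidedCategory.ofCartesianMonoidalCategory

section Aux

variable {C : Type*} [Category C] [CartesianMonoidalCategory C]

lemma braid_comp_snd (A Z : C) : (β_ A Z).hom ≫ snd Z A = fst A Z := by
  exact CartesianMonoidalCategory.braiding_hom_snd A Z

variable [MonoidalClosed C]

lemma cond_iff_aux (A X : C) (x : X ⟶ A) (Z : C) (q : Z ⊗ A ⟶ X) :
    q ≫ x = snd Z A ↔
      curry ((β_ A Z).hom ≫ q) ≫ (ihom A).map x = toUnit Z ≫ curry (fst A (𝟙_ C)) := by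
  rw [← curry_natural_right, ← curry_natural_left, Category.assoc,
    CartesianMonoidalCategory.whiskerLeft_fst]
  constructor
  · intro h
    rw [h, braid_comp_snd]
  · intro h
    have := curry_injective h
    rwa [← braid_comp_snd A Z, cancel_epi] at this

lemma map_iff_aux (A X Y : C) (p : Y ⊗ A ⟶ X) (Z : C) (u : Z ⟶ Y) (q : Z ⊗ A ⟶ X) :
    (u ▷ A) ≫ p = q ↔ u ≫ curry ((β_ A Y).hom ≫ p) = curry ((β_ A Z).hom ≫ q) := by
  rw [← curry_natural_left, ← Category.assoc, BraidedCategory.braiding_naturality_right,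
    Category.assoc]
  constructor
  · intro h; rw [h]
  · intro h
    have := curry_injective h
    rwa [cancel_epi] at this

end Aux

/-- In a cartesian closed category `C`, given `x : X ⟶ A` (an object of the
slice `C/A`) and an object `Y` together with `p : Y ⊗ A ⟶ X` over `A`, the map `p` exhibits `Y`
as `Π_{A → ⊤}(X, x)` (i.e. for all `Z`, composing with `p` gives a bijection
`Hom(Z, Y) ≅ Hom_{C/A}((Z ⊗ A, π₂), (X, x))`) if and only if the square with vertices
`Y`, `X^A`, `⊤`, `A^A` — with `Y ⟶ X^A` the transpose of `p`, `⊤ ⟶ A^A` the name of the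
identity of `A`, and `X^A ⟶ A^A` the map `x^A` — is a pullback.  In other words, the right
adjoint to pullback along `A → ⊤` is computed as the object of sections of `x`. -/
theorem pi_to_terminal_iff_sections_pullback {C : Type*} [Category C]
    [CartesianMonoidalCategory C] [MonoidalClosed C]
    (A X Y : C) (x : X ⟶ A) (p : Y ⊗ A ⟶ X) (hp : p ≫ x = snd Y A) :
    (∀ (Z : C) (q : Z ⊗ A ⟶ X), q ≫ x = snd Z A →
        ∃! u : Z ⟶ Y, (u ▷ A) ≫ p = q) ↔
      IsPullback (MonoidalClosed.curry ((BraidedCategory.ofCartesianMonoidalCategory.braiding A Y).hom ≫ p)) (toUnit Y)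
        ((ihom A).map x) (MonoidalClosed.curry (fst A (𝟙_ C))) := by
  have w : curry ((β_ A Y).hom ≫ p) ≫ (ihom A).map x = toUnit Y ≫ curry (fst A (𝟙_ C)) :=
    (cond_iff_aux A X x Y p).mp hp
  constructor
  · intro h
    refine IsPullback.of_isLimit (PullbackCone.IsLimit.mk w (fun s => ?_) ?_ ?_ ?_)
    case refine_1 =>
      -- the lift
      have hq : ((β_ A s.pt).inv ≫ uncurry s.fst) ≫ x = snd s.pt A := by
        rw [cond_iff_aux]
        have : (β_ A s.pt).hom ≫ (β_ A s.pt).inv ≫ uncurry s.fst = uncurry s.fst := by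
          rw [Iso.hom_inv_id_assoc]
        rw [this, curry_uncurry]
        have hs := s.condition
        rwa [CartesianMonoidalCategory.toUnit_unique s.snd (toUnit s.pt)] at hs
      exact (h s.pt ((β_ A s.pt).inv ≫ uncurry s.fst) hq).exists.choose
    case refine_2 =>
      intro s
      set q := (β_ A s.pt).inv ≫ uncurry s.fst with hqdef
      have hq : q ≫ x = snd s.pt A := by
        rw [cond_iff_aux]
        have : (β_ A s.pt).hom ≫ (β_ A s.pt).inv ≫ uncurry s.fst = uncurry s.fst := by
          rw [Iso.hom_inv_id_assoc]
        rw [hqdef, this, curry_uncurry]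
        have hs := s.condition
        rwa [CartesianMonoidalCategory.toUnit_unique s.snd (toUnit s.pt)] at hs
      have hu := (h s.pt q hq).exists.choose_spec
      rw [map_iff_aux] at hu
      rw [hu, hqdef, Iso.hom_inv_id_assoc, curry_uncurry]
    case refine_3 =>
      intro s
      exact CartesianMonoidalCategory.toUnit_unique _ _
    case refine_4 =>
      intro s m hm₁ _
      set q := (β_ A s.pt).inv ≫ uncurry s.fst with hqdef
      have hq : q ≫ x = snd s.pt A := by
        rw [cond_iff_aux]
        have : (β_ A s.pt).hom ≫ (β_ A s.pt).inv ≫ uncurry s.fst = uncurry s.fst := by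
          rw [Iso.hom_inv_id_assoc]
        rw [hqdef, this, curry_uncurry]
        have hs := s.condition
        rwa [CartesianMonoidalCategory.toUnit_unique s.snd (toUnit s.pt)] at hs
      have key : curry ((β_ A s.pt).hom ≫ q) = s.fst := by
        rw [hqdef, Iso.hom_inv_id_assoc, curry_uncurry]
      have hm : (m ▷ A) ≫ p = q := by
        rw [map_iff_aux, key]; exact hm₁
      have hchoice : ((h s.pt q hq).exists.choose ▷ A) ≫ p = q :=
        (h s.pt q hq).exists.choose_spec
      exact (h s.pt q hq).unique hm hchoice
  · intro hP Z q hq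
    have hcond : curry ((β_ A Z).hom ≫ q) ≫ (ihom A).map x = toUnit Z ≫ curry (fst A (𝟙_ C)) :=
      (cond_iff_aux A X x Z q).mp hq
    refine ⟨hP.lift (curry ((β_ A Z).hom ≫ q)) (toUnit Z) hcond, ?_, ?_⟩
    · show _ ▷ A ≫ p = q
      rw [map_iff_aux]
      exact hP.lift_fst _ _ _
    · intro v hv
      apply hP.hom_ext
      · rw [IsPullback.lift_fst]
        rwa [← map_iff_aux]
      · exact CartesianMonoidalCategory.toUnit_unique _ _
end

section
/- If C is a locally cartesian closed category, then for every morphism f : A → B the pullback functor f* : C/B → C/A has a right adjoint Π_f; the case of general f reduces to the case where B is terminal via the canonical isomorphisms of slice categories (C/A) ≅ (C/B)/(A, f) and (C/B) ≅ (C/B)/(B, id). -/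
open CategoryTheory CategoryTheory.Limits

noncomputable section AuxLCCC

open MonoidalCategory CartesianMonoidalCategory SemiCartesianMonoidalCategory MonoidalClosed CartesianClosed

variable {D : Type*} [Category D] [CartesianMonoidalCategory D] (F : D)

/-- The functor `X ↦ (F ⊗ X, fst : F ⊗ X ⟶ F)` from `D` to `Over F`. -/
@[simps, reducible]
def lcccStar : D ⥤ Over F where
  obj X := Over.mk (fst F X)
  map {X Y} h := Over.homMk (F ◁ h) (by simp)
  map_id X := by ext; simp
  map_comp h k := by ext; simp [MonoidalCategory.whiskerLeft_comp]

/-- `Over.forget F ⊣ lcccStar F`. -/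
def lcccForgetAdjStar : Over.forget F ⊣ lcccStar F :=
  Adjunction.mkOfHomEquiv
    { homEquiv := fun Y X =>
        { toFun := fun (u : Y.left ⟶ X) => Over.homMk (lift Y.hom u) (by simp)
          invFun := fun v => v.left ≫ snd F X
          left_inv := fun (u : Y.left ⟶ X) => by simp
          right_inv := fun v => by
            ext
            apply CartesianMonoidalCategory.hom_ext
            · simpa using (Over.w v).symm
            · simp }
      homEquiv_naturality_left_symm := fun h v => Category.assoc _ _ _
      homEquiv_naturality_right := fun u k => by
        ext
        exact (lift_whiskerLeft _ _ _).symm }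

variable [MonoidalClosed D] [HasPullbacks D]

/-- The global point of `F ⟹ F` corresponding to the identity of `F`. -/
def lcccPoint : 𝟙_ D ⟶ F ⟹ F := curry (fst F (𝟙_ D))

/-- The pushforward functor `Over F ⥤ D`, right adjoint to `lcccStar F`. -/
@[simps, reducible]
def lcccPushforward : Over F ⥤ D where
  obj g := pullback ((ihom F).map g.hom) (lcccPoint F)
  map {g g'} k :=
    pullback.lift (pullback.fst _ _ ≫ (ihom F).map k.left) (pullback.snd _ _)
      (by rw [Category.assoc, ← Functor.map_comp, Over.w k, pullback.condition])
  map_id g := by apply pullback.hom_ext <;> simp [pullback.lift_fst, pullback.lift_snd, pullback.lift_fst_assoc, pullback.lift_snd_assoc]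
  map_comp h k := by apply pullback.hom_ext <;> simp [pullback.lift_fst, pullback.lift_snd, pullback.lift_fst_assoc, pullback.lift_snd_assoc]

/-- Forward direction of the hom-equivalence of the adjunction. -/
def lcccFwd (X : D) (g : Over F) (u : (lcccStar F).obj X ⟶ g) :
    X ⟶ (lcccPushforward F).obj g :=
  pullback.lift (curry u.left) (toUnit X) (by
    rw [← curry_natural_right, Over.w u]
    rw [show toUnit X ≫ lcccPoint F = curry (F ◁ toUnit X ≫ fst F (𝟙_ D)) from
      (curry_natural_left _ _).symm]
    simp)

/-- Backward direction of the hom-equivalence of the adjunction. -/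
def lcccBwd (X : D) (g : Over F) (v : X ⟶ (lcccPushforward F).obj g) :
    (lcccStar F).obj X ⟶ g :=
  Over.homMk (uncurry (v ≫ pullback.fst _ _)) (by
    rw [← uncurry_natural_right, Category.assoc, pullback.condition,
      ← Category.assoc, toUnit_unique (v ≫ pullback.snd _ _) (toUnit X),
      show toUnit X ≫ lcccPoint F = curry (F ◁ toUnit X ≫ fst F (𝟙_ D)) from
        (curry_natural_left _ _).symm]
    simp)

lemma lcccBwd_lcccFwd (X : D) (g : Over F) (u : (lcccStar F).obj X ⟶ g) :
    lcccBwd F X g (lcccFwd F X g u) = u := by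
  ext; simp [lcccBwd, lcccFwd, pullback.lift_fst, pullback.lift_snd, pullback.lift_fst_assoc, pullback.lift_snd_assoc]

lemma lcccFwd_lcccBwd (X : D) (g : Over F) (v : X ⟶ (lcccPushforward F).obj g) :
    lcccFwd F X g (lcccBwd F X g v) = v := by
  apply pullback.hom_ext
  · simp [lcccBwd, lcccFwd, pullback.lift_fst, pullback.lift_snd, pullback.lift_fst_assoc, pullback.lift_snd_assoc]
  · exact toUnit_unique _ _

lemma lcccBwd_natural (X X' : D) (g : Over F) (h : X ⟶ X')
    (v : X' ⟶ (lcccPushforward F).obj g) :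
    lcccBwd F X g (h ≫ v) = (lcccStar F).map h ≫ lcccBwd F X' g v := by
  ext; simp [lcccBwd, uncurry_natural_left]

lemma lcccFwd_natural (X : D) (g g' : Over F) (u : (lcccStar F).obj X ⟶ g) (k : g ⟶ g') :
    lcccFwd F X g' (u ≫ k) = lcccFwd F X g u ≫ (lcccPushforward F).map k := by
  apply pullback.hom_ext
  · simp [lcccFwd, curry_natural_right, pullback.lift_fst, pullback.lift_snd, pullback.lift_fst_assoc, pullback.lift_snd_assoc]
  · exact toUnit_unique _ _

/-- The adjunction `lcccStar F ⊣ lcccPushforward F`. -/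
def lcccStarAdjPushforward : lcccStar F ⊣ lcccPushforward F :=
  Adjunction.mkOfHomEquiv
    { homEquiv := fun X g =>
        { toFun := lcccFwd F X g
          invFun := lcccBwd F X g
          left_inv := lcccBwd_lcccFwd F X g
          right_inv := lcccFwd_lcccBwd F X g }
      homEquiv_naturality_left_symm := fun h v => lcccBwd_natural F _ _ _ h v
      homEquiv_naturality_right := fun u k => lcccFwd_natural F _ _ _ u k }

end AuxLCCC

/-- If `C` is locally cartesian closed (it has a terminal object, pullbacks,
and every slice is cartesian closed), then for every morphism `f : A ⟶ B` the pullback functor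
`f* : C/B ⥤ C/A` has a right adjoint `Π_f`, i.e. `f*` is a left adjoint. -/
theorem pullback_isLeftAdjoint_of_locallyCartesianClosed {C : Type*} [Category C]
    [HasTerminal C] [HasPullbacks C]
    (hccc : ∀ X : C, ∃ h : CartesianMonoidalCategory (Over X),
      Nonempty (@MonoidalClosed (Over X) _ h.toMonoidalCategory))
    {A B : C} (f : A ⟶ B) :
    (Over.pullback f).IsLeftAdjoint := by
  obtain ⟨hB, ⟨hcc⟩⟩ := hccc B
  letI := hB
  letI := hcc
  -- the object of `Over B` corresponding to `f`
  set F : Over B := Over.mk f with hF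
  -- the iterated slice equivalence `(C/B)/F ≌ C/A`
  let E : Over F ≌ Over A := Over.iteratedSliceEquiv F
  -- `E.inverse ⋙ Over.forget F ≅ Over.map f`
  let natIso : E.inverse ⋙ Over.forget F ≅ Over.map f :=
    NatIso.ofComponents (fun g => Over.isoMk (Iso.refl _) (by exact Category.id_comp _)) (by
      intro X Y h
      ext
      exact (Category.comp_id _).trans (Category.id_comp _).symm)
  -- hence `Over.map f ⊣ lcccStar F ⋙ E.functor`
  let adj1 : Over.map f ⊣ lcccStar F ⋙ E.functor :=
    ((E.symm.toAdjunction.comp (lcccForgetAdjStar F)).ofNatIsoLeft natIso)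
  -- right adjoints to `Over.map f` are unique
  let iso2 : Over.pullback f ≅ lcccStar F ⋙ E.functor :=
    Adjunction.rightAdjointUniq (Over.mapPullbackAdj f) adj1
  exact ⟨E.inverse ⋙ lcccPushforward F,
    ⟨((lcccStarAdjPushforward F).comp E.toAdjunction).ofNatIsoLeft iso2.symm⟩⟩
end

section
/- In a right-proper model category in which the cofibrations are exactly the monomorphisms, if p : X → Y is a fibration and C is a fibrant object, then the induced map on exponentials p^C : X^C → Y^C is a fibration. -/
open CategoryTheory CategoryTheory.Limits

/-- A model structure on a category `C`: classes of weak equivalences, cofibrations and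
fibrations satisfying two-out-of-three, the lifting axioms (in the strong form in which the
(trivial) cofibrations are characterized by the lifting property, which also encodes retract
closure), and the two factorization axioms. -/
structure ModelStruct (C : Type*) [Category C] where
  weq : MorphismProperty C
  cof : MorphismProperty C
  fib : MorphismProperty C
  weq_of_iso : ∀ {X Y : C} (f : X ⟶ Y), IsIso f → weq f
  weq_comp : ∀ {X Y Z : C} (f : X ⟶ Y) (g : Y ⟶ Z), weq f → weq g → weq (f ≫ g)
  weq_cancel_left : ∀ {X Y Z : C} (f : X ⟶ Y) (g : Y ⟶ Z), weq f → weq (f ≫ g) → weq g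
  weq_cancel_right : ∀ {X Y Z : C} (f : X ⟶ Y) (g : Y ⟶ Z), weq g → weq (f ≫ g) → weq f
  cof_iff_llp : ∀ {A B : C} (i : A ⟶ B),
    cof i ↔ ∀ {X Y : C} (q : X ⟶ Y), fib q → weq q → HasLiftingProperty i q
  fib_iff_rlp : ∀ {X Y : C} (q : X ⟶ Y),
    fib q ↔ ∀ {A B : C} (i : A ⟶ B), cof i → weq i → HasLiftingProperty i q
  fact_left : ∀ {X Y : C} (f : X ⟶ Y), ∃ (Z : C) (i : X ⟶ Z) (q : Z ⟶ Y),
    cof i ∧ weq i ∧ fib q ∧ i ≫ q = f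
  fact_right : ∀ {X Y : C} (f : X ⟶ Y), ∃ (Z : C) (i : X ⟶ Z) (q : Z ⟶ Y),
    cof i ∧ fib q ∧ weq q ∧ i ≫ q = f

variable {C : Type*} [Category C]

/-- Right properness: weak equivalences are stable under pullback along fibrations. -/
def ModelStruct.RightProper (M : ModelStruct C) : Prop :=
  ∀ {W X Y Z : C} (p' : W ⟶ X) (f' : W ⟶ Y) (f : X ⟶ Z) (q : Y ⟶ Z),
    IsPullback p' f' f q → M.fib q → M.weq f → M.weq f'

/-- An object is fibrant if its map to a terminal object is a fibration. -/
def ModelStruct.Fibrant (M : ModelStruct C) (X : C) : Prop :=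
  ∃ (T : C) (hT : IsTerminal T), M.fib (hT.from X)

/-- An object is cofibrant if the map from an initial object is a cofibration. -/
def ModelStruct.Cofibrant (M : ModelStruct C) (X : C) : Prop :=
  ∃ (I : C) (hI : IsInitial I), M.cof (hI.to X)

open MonoidalCategory

/-- In a right-proper model category whose cofibrations are exactly the
monomorphisms (and whose underlying category is cartesian closed), if `p : X ⟶ Y` is a
fibration and `Cobj` is a fibrant object, then the induced map on exponentials
`p^C : X^C ⟶ Y^C` is a fibration. -/
theorem fibration_exp_of_fibration {C : Type*} [Category C]
    [CartesianMonoidalCategory C] [MonoidalClosed C]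
    (M : ModelStruct C) (hrp : M.RightProper)
    (hcof : ∀ {X Y : C} (f : X ⟶ Y), M.cof f ↔ Mono f)
    {X Y : C} (p : X ⟶ Y) (hp : M.fib p)
    (Cobj : C) (hC : M.Fibrant Cobj) :
    M.fib ((ihom Cobj).map p) := by
  rw [M.fib_iff_rlp]
  intro A B i hi hwi
  rw [← (ihom.adjunction Cobj).hasLiftingProperty_iff]
  have hfib := fun {A B : C} => (M.fib_iff_rlp p).1 hp (A := A) (B := B)
  have hmono : Mono i := (hcof i).1 hi
  -- the whiskered map is a cofibration (it is a mono)
  have hcofw : M.cof (Cobj ◁ i) := by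
    rw [hcof]
    constructor
    intro Z f g h
    apply CartesianMonoidalCategory.hom_ext
    · have := congrArg (· ≫ CartesianMonoidalCategory.fst Cobj B) h
      simpa using this
    · have := congrArg (· ≫ CartesianMonoidalCategory.snd Cobj B) h
      simp only [Category.assoc, CartesianMonoidalCategory.whiskerLeft_snd] at this
      rw [← Category.assoc, ← Category.assoc] at this
      exact cancel_mono i |>.1 this
  -- the second projection from Cobj ⊗ B is a fibration
  obtain ⟨T, hT, hfT⟩ := hC
  have hliftT := fun {A B : C} => (M.fib_iff_rlp (hT.from Cobj)).1 hfT (A := A) (B := B)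
  have hsnd : M.fib (CartesianMonoidalCategory.snd Cobj B) := by
    rw [M.fib_iff_rlp]
    intro A' B' j hj hwj
    have : HasLiftingProperty j (hT.from Cobj) := hliftT j hj hwj
    constructor
    intro u v sq
    have sq' : CommSq (u ≫ CartesianMonoidalCategory.fst Cobj B) j (hT.from Cobj)
        (hT.from B') := ⟨hT.hom_ext _ _⟩
    refine ⟨⟨⟨CartesianMonoidalCategory.lift sq'.lift v, ?_, ?_⟩⟩⟩
    · apply CartesianMonoidalCategory.hom_ext
      · simp [sq'.fac_left]
      · simpa using sq.w.symm
    · simp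
  -- the pullback square
  have w : CartesianMonoidalCategory.snd Cobj A ≫ i =
      (Cobj ◁ i) ≫ CartesianMonoidalCategory.snd Cobj B := by simp
  have hpb : IsPullback (CartesianMonoidalCategory.snd Cobj A) (Cobj ◁ i) i
      (CartesianMonoidalCategory.snd Cobj B) :=
    IsPullback.of_isLimit (PullbackCone.IsLimit.mk w
      (fun s => CartesianMonoidalCategory.lift (s.snd ≫ CartesianMonoidalCategory.fst Cobj B) s.fst)
      (fun s => by simp)
      (fun s => by
        apply CartesianMonoidalCategory.hom_ext
        · simp
        · simpa using s.condition)
      (fun s m h₁ h₂ => by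
        apply CartesianMonoidalCategory.hom_ext
        · have := congrArg (· ≫ CartesianMonoidalCategory.fst Cobj B) h₂
          simpa using this
        · simpa using h₁))
  -- the whiskered map is a weak equivalence by right properness
  have hweqw : M.weq (Cobj ◁ i) := hrp _ _ _ _ hpb hsnd hwi
  exact hfib (Cobj ◁ i) hcofw hweqw
end

section
/- In a 'suitable' model category, the full subcategory of fibrant objects is closed under finite coproducts and under exponentials, and hence is a bicartesian closed category with the inclusion into the ambient category a bicartesian closed functor. -/
open CategoryTheory CategoryTheory.Limits

variable {C : Type*} [Category C]

open MonoidalCategory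
open CartesianClosed

section Aux

open CartesianMonoidalCategory

variable {D : Type*} [Category D]

lemma ModelStruct.fib_of_isIso (M : ModelStruct D) {X Y : D} (f : X ⟶ Y) (hf : IsIso f) :
    M.fib f := by
  rw [M.fib_iff_rlp]
  intro A B i _ _
  infer_instance

lemma ModelStruct.fib_comp (M : ModelStruct D) {X Y Z : D} (f : X ⟶ Y) (g : Y ⟶ Z)
    (hf : M.fib f) (hg : M.fib g) : M.fib (f ≫ g) := by
  rw [M.fib_iff_rlp]
  intro A B i hc hw
  haveI := (M.fib_iff_rlp f).1 hf i hc hw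
  haveI := (M.fib_iff_rlp g).1 hg i hc hw
  infer_instance

lemma ModelStruct.fib_of_isPullback (M : ModelStruct D) {P X Y Z : D}
    (p' : P ⟶ X) (f' : P ⟶ Y) (f : X ⟶ Z) (q : Y ⟶ Z)
    (sq : IsPullback p' f' f q) (hf : M.fib f) : M.fib f' := by
  rw [M.fib_iff_rlp]
  intro A B i hc hw
  haveI := (M.fib_iff_rlp f).1 hf i hc hw
  constructor
  intro u v h
  have h' : CommSq (u ≫ p') i f (v ≫ q) := ⟨by
    rw [Category.assoc, sq.w, reassoc_of% h.w]⟩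
  obtain ⟨⟨l⟩⟩ := HasLiftingProperty.sq_hasLift h'
  refine ⟨⟨⟨sq.lift l.l v (by rw [l.fac_right]), ?_, sq.lift_snd _ _ _⟩⟩⟩
  apply sq.hom_ext
  · rw [Category.assoc, sq.lift_fst, l.fac_left]
  · rw [Category.assoc, sq.lift_snd, h.w]

lemma ModelStruct.fibrant_of_isTerminal (M : ModelStruct D) {X T : D} (hT : IsTerminal T)
    (h : M.Fibrant X) : M.fib (hT.from X) := by
  obtain ⟨T', hT', hf⟩ := h
  have : hT.from X = hT'.from X ≫ hT.from T' := hT.hom_ext _ _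
  rw [this]
  exact M.fib_comp _ _ hf (M.fib_of_isIso _ ⟨hT'.from T, hT'.hom_ext _ _, hT.hom_ext _ _⟩)

end Aux

section Prod

variable {D : Type*} [Category D] [CartesianMonoidalCategory D]
open CartesianMonoidalCategory MonoidalCategory

/-- The product square over a terminal object is a pullback. -/
lemma isPullback_prod_terminal {T : D} (hT : IsTerminal T) (X Y : D) :
    IsPullback (fst X Y) (snd X Y) (hT.from X) (hT.from Y) :=
  IsPullback.of_isLimit <| PullbackCone.IsLimit.mk (hT.hom_ext _ _)
    (fun s => lift s.fst s.snd) (fun s => lift_fst _ _) (fun s => lift_snd _ _)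
    (fun s m h1 h2 => by apply CartesianMonoidalCategory.hom_ext <;> simpa)

/-- Whiskering a map by an object gives a pullback square with the projections. -/
lemma isPullback_whiskerLeft {A B : D} (X : D) (i : A ⟶ B) :
    IsPullback (snd X A) (X ◁ i) i (snd X B) :=
  IsPullback.of_isLimit <| PullbackCone.IsLimit.mk (by simp)
    (fun s => lift (s.snd ≫ fst X B) s.fst)
    (fun s => lift_snd _ _)
    (fun s => by apply CartesianMonoidalCategory.hom_ext <;> simp [s.condition])
    (fun s m h1 h2 => by
      apply CartesianMonoidalCategory.hom_ext
      · have := h2 =≫ fst X B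
        simpa using this
      · simpa using h1)

end Prod


/-- In a *suitable* model category — one which is (i) right proper,
(ii) has cofibrations exactly the monomorphisms, (iii) has `[f,g] : A ⨿ B ⟶ X` a fibration
whenever `f` and `g` are, and `0 ⟶ A` always a fibration, and (iv) is locally cartesian
closed (in particular cartesian closed with finite coproducts) as a category — the fibrant
objects are closed under the terminal object, binary products, the initial object, binary
coproducts, and exponentials; hence they form a bicartesian closed full subcategory with
bicartesian closed inclusion. -/
theorem fibrant_closed_under_bicartesian_closed_structure {C : Type*} [Category C]
    [CartesianMonoidalCategory C] [MonoidalClosed C] [HasInitial C] [HasBinaryCoproducts C]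
    (M : ModelStruct C)
    (hrp : M.RightProper)
    (hcof : ∀ {X Y : C} (f : X ⟶ Y), M.cof f ↔ Mono f)
    (hfib_coprod : ∀ {A B X : C} (f : A ⟶ X) (g : B ⟶ X),
      M.fib f → M.fib g → M.fib (coprod.desc f g))
    (hfib_initial : ∀ A : C, M.fib (initial.to A))
    (hlcc : ∀ X : C, ∃ h : CartesianMonoidalCategory (Over X),
      Nonempty (@MonoidalClosed (Over X) _ h.toMonoidalCategory)) :
    M.Fibrant (𝟙_ C) ∧ M.Fibrant (⊥_ C) ∧
      (∀ X Y : C, M.Fibrant X → M.Fibrant Y →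
        M.Fibrant (X ⊗ Y) ∧ M.Fibrant (X ⨿ Y) ∧ M.Fibrant (X ⟹ Y)) := by
  classical
  have hT : IsTerminal (𝟙_ C) := IsTerminal.ofUnique _
  refine ⟨⟨𝟙_ C, hT, M.fib_of_isIso _ ?_⟩, ⟨𝟙_ C, hT, ?_⟩, fun X Y hX hY => ?_⟩
  · have h1 : hT.from (𝟙_ C) = 𝟙 _ := hT.hom_ext _ _
    rw [h1]; infer_instance
  · have h1 : hT.from (⊥_ C) = initial.to _ := initial.hom_ext _ _
    rw [h1]; exact hfib_initial _
  · have hfX := M.fibrant_of_isTerminal hT hX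
    have hfY := M.fibrant_of_isTerminal hT hY
    have hT' : IsTerminal (X ⟹ 𝟙_ C) := by
      refine IsTerminal.ofUniqueHom (fun Z => MonoidalClosed.curry (CartesianMonoidalCategory.toUnit _))
        (fun Z m => ?_)
      rw [← MonoidalClosed.curry_uncurry m,
        CartesianMonoidalCategory.toUnit_unique (MonoidalClosed.uncurry m) (CartesianMonoidalCategory.toUnit _)]
    refine ⟨⟨𝟙_ C, hT, ?_⟩, ⟨𝟙_ C, hT, ?_⟩, ⟨X ⟹ 𝟙_ C, hT', ?_⟩⟩
    · have hsnd : M.fib (CartesianMonoidalCategory.snd X Y) :=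
        M.fib_of_isPullback _ _ _ _ (isPullback_prod_terminal hT X Y) hfX
      have h1 : hT.from (X ⊗ Y) = CartesianMonoidalCategory.snd X Y ≫ hT.from Y := hT.hom_ext _ _
      rw [h1]; exact M.fib_comp _ _ hsnd hfY
    · have h1 : hT.from (X ⨿ Y) = coprod.desc (hT.from X) (hT.from Y) := hT.hom_ext _ _
      rw [h1]; exact hfib_coprod _ _ hfX hfY
    · have h1 : hT'.from (X ⟹ Y) = (ihom X).map (hT.from Y) := hT'.hom_ext _ _
      rw [h1, M.fib_iff_rlp]
      intro A B i hci hwi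
      rw [← Adjunction.hasLiftingProperty_iff (ihom.adjunction X)]
      have hmap : (tensorLeft X).map i = X ◁ i := rfl
      rw [hmap]
      have hmono_i : Mono i := (hcof i).1 hci
      have hmono : Mono (X ◁ i) := by
        constructor
        intro Z a b h
        apply CartesianMonoidalCategory.hom_ext
        · have := h =≫ CartesianMonoidalCategory.fst X B
          simpa using this
        · have := h =≫ CartesianMonoidalCategory.snd X B
          rw [Category.assoc, Category.assoc, CartesianMonoidalCategory.whiskerLeft_snd,
            ← Category.assoc, ← Category.assoc] at this
          exact (cancel_mono i).1 this
      have hfsnd : M.fib (CartesianMonoidalCategory.snd X B) :=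
        M.fib_of_isPullback _ _ _ _ (isPullback_prod_terminal hT X B) hfX
      have hweq : M.weq (X ◁ i) :=
        hrp _ _ _ _ (isPullback_whiskerLeft X i) hfsnd hwi
      exact (M.fib_iff_rlp _).1 hfY _ ((hcof _).2 hmono) hweq
end

section
/- Generalized universal property of cartesian lifts in a 1-discrete 2-fibration: given a 1D2F p : C → B, a cartesian 1-cell q : Q → R over g : B₀ → C₀, a 1-cell r : P → R over h : A → C₀, a 1-cell f : A → B₀, and a 2-cell α : h → g ∘ f in B, there exists a unique 1-cell p' : P → Q over f for which there exists a (necessarily unique) 2-cell r → q ∘ p' over α. -/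
open CategoryTheory CategoryTheory.Bicategory

namespace FOHL

variable (C : Type*) (B : Type*) [Bicategory C] [Bicategory.Strict C]
  [Bicategory B] [Bicategory.Strict B]

/-- A (strict) 2-functor between strict 2-categories: a functor on underlying 1-categories
together with an action on 2-cells, strictly compatible with vertical composition,
identities and whiskering. -/
structure TwoFunctor where
  toFunctor : C ⥤ B
  map₂ : ∀ {a b : C} {f g : a ⟶ b}, (f ⟶ g) → (toFunctor.map f ⟶ toFunctor.map g)
  map₂_id : ∀ {a b : C} (f : a ⟶ b), map₂ (𝟙 f) = 𝟙 (toFunctor.map f)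
  map₂_comp : ∀ {a b : C} {f g h : a ⟶ b} (η : f ⟶ g) (θ : g ⟶ h),
    map₂ (η ≫ θ) = map₂ η ≫ map₂ θ
  map₂_whiskerLeft : ∀ {a b c : C} (f : a ⟶ b) {g h : b ⟶ c} (η : g ⟶ h),
    map₂ (f ◁ η) = eqToHom (toFunctor.map_comp f g) ≫ (toFunctor.map f ◁ map₂ η) ≫
      eqToHom (toFunctor.map_comp f h).symm
  map₂_whiskerRight : ∀ {a b c : C} {f g : a ⟶ b} (η : f ⟶ g) (h : b ⟶ c),
    map₂ (η ▷ h) = eqToHom (toFunctor.map_comp f h) ≫ (map₂ η ▷ toFunctor.map h) ≫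
      eqToHom (toFunctor.map_comp g h).symm

variable {C B}

/-- Auxiliary inductive expressing that a 2-cell `η` of `C` lies over a 2-cell `θ` of `B`
with respect to the 2-functor `P` (cf. `CategoryTheory.IsHomLiftAux`). -/
inductive IsTwoCellLiftAux (P : TwoFunctor C B) :
    ∀ {R S : B} {u v : R ⟶ S}, (u ⟶ v) → ∀ {a b : C} {f g : a ⟶ b}, (f ⟶ g) → Prop
  | map {a b : C} {f g : a ⟶ b} (η : f ⟶ g) : IsTwoCellLiftAux P (P.map₂ η) η

/-- The 2-cell `η` of `C` lies over the 2-cell `θ` of `B`. -/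
def TwoFunctor.IsLift₂ (P : TwoFunctor C B) {R S : B} {u v : R ⟶ S} (θ : u ⟶ v)
    {a b : C} {f g : a ⟶ b} (η : f ⟶ g) : Prop :=
  IsTwoCellLiftAux P θ η

/-- `P` is a 1-discrete 2-fibration: the underlying functor of 1-categories is a Grothendieck
fibration and, for every 2-cell `α` of the base and every 1-cell lying over its domain, there
is a unique 2-cell lying over `α` with that 1-cell as domain. -/
structure TwoFunctor.Is1D2F (P : TwoFunctor C B) : Prop where
  fibered : P.toFunctor.IsFibered
  lift₂ : ∀ {R S : B} {u v : R ⟶ S} (α : u ⟶ v) {a b : C} (m : a ⟶ b),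
    P.toFunctor.IsHomLift u m →
      ∃! gη : Σ g' : a ⟶ b, m ⟶ g', P.IsLift₂ α gη.2

/-- A 1-cell in a (strict) 2-category is an equivalence if it admits a quasi-inverse. -/
def IsEquivalenceOneCell {a b : C} (f : a ⟶ b) : Prop :=
  ∃ g : b ⟶ a, Nonempty (𝟙 a ≅ f ≫ g) ∧ Nonempty (𝟙 b ≅ g ≫ f)

end FOHL

open CategoryTheory CategoryTheory.Functor FOHL


lemma isHomLift_of_isLift₂
    {C B : Type*} [Bicategory C] [Bicategory.Strict C] [Bicategory B] [Bicategory.Strict B]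
    {P : TwoFunctor C B} {R S : B} {u v : R ⟶ S} {θ : u ⟶ v} {a b : C} {m n : a ⟶ b}
    {η : m ⟶ n} (hl : P.IsLift₂ θ η) : P.toFunctor.IsHomLift v n := by
  cases hl; infer_instance

/-- generalized universal property of cartesian lifts in a 1-discrete
2-fibration. Given a 1D2F `P : C ⥤ B`, a cartesian 1-cell `q : Q₀ ⟶ R₀` over `g : B₀ ⟶ C₀`,
a 1-cell `r : P₀ ⟶ R₀` over `h : A ⟶ C₀`, a 1-cell `f : A ⟶ B₀`, and a 2-cell
`α : h ⟶ g ∘ f` in the base, there exists a unique 1-cell `p' : P₀ ⟶ Q₀` over `f` for which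
there exists a (necessarily unique) 2-cell `r ⟶ q ∘ p'` over `α`. -/
theorem oneD2F_cartesian_generalized_universal_property
    {C B : Type*} [Bicategory C] [Bicategory.Strict C] [Bicategory B] [Bicategory.Strict B]
    (P : TwoFunctor C B) (hP : P.Is1D2F)
    {A B₀ C₀ : B} {P₀ Q₀ R₀ : C}
    (f : A ⟶ B₀) (g : B₀ ⟶ C₀) (h : A ⟶ C₀) (α : h ⟶ f ≫ g)
    (q : Q₀ ⟶ R₀) (hq : P.toFunctor.IsStronglyCartesian g q)
    (r : P₀ ⟶ R₀) (hr : P.toFunctor.IsHomLift h r) :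
    ∃! p' : P₀ ⟶ Q₀, P.toFunctor.IsHomLift f p' ∧
      ∃ τ : r ⟶ p' ≫ q, P.IsLift₂ α τ := by
  obtain ⟨⟨g', η⟩, hη, huniq⟩ := hP.lift₂ α r hr
  haveI : P.toFunctor.IsHomLift (f ≫ g) g' := isHomLift_of_isLift₂ hη
  haveI := hq
  obtain ⟨p', ⟨hp'lift, hfac⟩, puniq⟩ :=
    IsStronglyCartesian.universal_property P.toFunctor g q f (f ≫ g) rfl g'
  subst hfac
  refine ⟨p', ⟨hp'lift, η, hη⟩, ?_⟩
  rintro p'' ⟨hlift'', τ', hτ'⟩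
  haveI := hlift''
  have h1 : (⟨p'' ≫ q, τ'⟩ : Σ g' : P₀ ⟶ R₀, r ⟶ g') = ⟨p' ≫ q, η⟩ := huniq ⟨p'' ≫ q, τ'⟩ hτ'
  have h2 : p'' ≫ q = p' ≫ q := congrArg Sigma.fst h1
  exact puniq p'' ⟨hlift'', h2⟩
end

section
/- Uniqueness of cartesian lifts in a 1D2F up to invertible 2-cell over an invertible 2-cell: given a 1D2F p : C → B, 1-cells p : P → R over f and q : Q → R over g, both cartesian, a vertical 1-cell r : P → Q (lying over an identity), and a 2-cell σ : p → q ∘ r lying over an invertible 2-cell α : f → g, the 1-cell r is an isomorphism. -/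
open CategoryTheory CategoryTheory.Bicategory

namespace FOHL

variable (C : Type*) (B : Type*) [Bicategory C] [Bicategory.Strict C]
  [Bicategory B] [Bicategory.Strict B]

variable {C B}

lemma whiskerLeft_whiskerLeft_eqToHom' {D : Type*} [Bicategory D] [Bicategory.Strict D]
    {x y z : D} (h : x = y) {u v : x ⟶ z} (η : u ⟶ v) :
    eqToHom h ◁ (eqToHom h.symm ◁ η) =
      eqToHom (by subst h; simp) ≫ η ≫ eqToHom (by subst h; simp) := by
  subst h
  simp [Bicategory.id_whiskerLeft, Bicategory.Strict.leftUnitor_eqToIso]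

lemma whiskerLeft_congr_hom' {D : Type*} [Bicategory D] [Bicategory.Strict D]
    {x y z : D} {f f' : x ⟶ y} (h : f = f') {u v : y ⟶ z} (η : u ⟶ v) :
    f ◁ η = eqToHom (by rw [h]) ≫ f' ◁ η ≫ eqToHom (by rw [h]) := by
  subst h; simp

lemma TwoFunctor.isLift₂_elim {P : TwoFunctor C B} {R S : B} {u v : R ⟶ S} {θ : u ⟶ v}
    {a b : C} {f g : a ⟶ b} {η : f ⟶ g} (h : P.IsLift₂ θ η) :
    ∃ (_ : R = P.toFunctor.obj a) (_ : S = P.toFunctor.obj b),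
      HEq u (P.toFunctor.map f) ∧ HEq v (P.toFunctor.map g) ∧ HEq θ (P.map₂ η) := by
  cases h; exact ⟨rfl, rfl, HEq.rfl, HEq.rfl, HEq.rfl⟩

lemma TwoFunctor.isLift₂_intro (P : TwoFunctor C B) {a b : C} {f g : a ⟶ b} (η : f ⟶ g)
    {u v : P.toFunctor.obj a ⟶ P.toFunctor.obj b} (hu : u = P.toFunctor.map f)
    (hv : v = P.toFunctor.map g) (θ : u ⟶ v)
    (hθ : θ = eqToHom hu ≫ P.map₂ η ≫ eqToHom hv.symm) : P.IsLift₂ θ η := by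
  subst hu hv
  obtain rfl : θ = P.map₂ η := by simpa using hθ
  exact IsTwoCellLiftAux.map η

lemma TwoFunctor.map₂_eqToHom (P : TwoFunctor C B) {a b : C} {f g : a ⟶ b} (h : f = g) :
    P.map₂ (eqToHom h) = eqToHom (by rw [h]) := by
  subst h; simp [P.map₂_id]


end FOHL

open CategoryTheory CategoryTheory.Functor FOHL

/-- uniqueness of cartesian lifts in a 1D2F up to invertible 2-cell over an
invertible 2-cell. Given a 1D2F `P : C ⥤ B`, cartesian 1-cells `pm : P₀ ⟶ R₀` over `f` and
`q : Q₀ ⟶ R₀` over `g`, a vertical 1-cell `r : P₀ ⟶ Q₀` (lying over the identity), and a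
2-cell `σ : pm ⟶ r ≫ q` lying over an invertible 2-cell `α : f ⟶ g`, the 1-cell `r` is an
isomorphism. -/
theorem oneD2F_cartesian_unique_up_to_iso
    {C B : Type*} [Bicategory C] [Bicategory.Strict C] [Bicategory B] [Bicategory.Strict B]
    (P : TwoFunctor C B) (hP : P.Is1D2F)
    {A B₀ : B} {P₀ Q₀ R₀ : C}
    (f g : A ⟶ B₀) (α : f ⟶ g) (hα : IsIso α)
    (pm : P₀ ⟶ R₀) (hpm : P.toFunctor.IsStronglyCartesian f pm)
    (q : Q₀ ⟶ R₀) (hq : P.toFunctor.IsStronglyCartesian g q)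
    (r : P₀ ⟶ Q₀) (hr : P.toFunctor.IsHomLift (𝟙 A) r)
    (σ : pm ⟶ r ≫ q) (hσ : P.IsLift₂ α σ) :
    IsIso r := by
  haveI := hr
  haveI := hpm
  haveI := hq
  -- invert the lift hypothesis on σ
  obtain ⟨hA, hB₀, huf, hvg, hθσ⟩ := TwoFunctor.isLift₂_elim hσ
  subst hA hB₀
  obtain rfl : f = P.toFunctor.map pm := eq_of_heq huf
  obtain rfl : g = P.toFunctor.map (r ≫ q) := eq_of_heq hvg
  obtain rfl : α = P.map₂ σ := eq_of_heq hθσ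
  set F := P.toFunctor with hF
  have e : F.obj P₀ = F.obj Q₀ := (IsHomLift.codomain_eq F (𝟙 (F.obj P₀)) r).symm
  have hmr : F.map r = eqToHom e := by
    rw [IsHomLift.fac' F (𝟙 (F.obj P₀)) r]; simp
  have hgq : F.map (r ≫ q) = eqToHom e ≫ F.map q := by rw [F.map_comp, hmr]
  have hq2 : F.map q = eqToHom e.symm ≫ F.map (r ≫ q) := by
    rw [hgq, eqToHom_trans_assoc, eqToHom_refl, Category.id_comp]
  -- lift the 2-cell `inv α` (suitably whiskered) at `q`
  set β : F.map q ⟶ eqToHom e.symm ≫ F.map pm :=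
    eqToHom hq2 ≫ (eqToHom e.symm ◁ inv (P.map₂ σ)) with hβdef
  obtain ⟨⟨q', τ'⟩, hτ', -⟩ := hP.lift₂ β q inferInstance
  obtain ⟨-, -, -, hv', hbb⟩ := TwoFunctor.isLift₂_elim hτ'
  have hq' : F.map q' = eqToHom e.symm ≫ F.map pm := (eq_of_heq hv').symm
  have hτeq : P.map₂ τ' = eqToHom rfl ≫ β ≫ eqToHom hq'.symm :=
    (conj_eqToHom_iff_heq _ _ rfl hq').2 hbb.symm
  have hrq' : F.map (r ≫ q') = F.map pm := by
    rw [F.map_comp, hmr, hq', eqToHom_trans_assoc, eqToHom_refl, Category.id_comp]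
  -- key equality: r ≫ q' = pm, by uniqueness of lifts of 𝟙 over pm
  obtain ⟨z, hz, hzuniq⟩ := hP.lift₂ (𝟙 (F.map pm)) pm inferInstance
  have lift_id : P.IsLift₂ (𝟙 (F.map pm)) (𝟙 pm) := by
    apply P.isLift₂_intro (𝟙 pm) rfl rfl
    simp [P.map₂_id]
    rfl
  have lift_cand : P.IsLift₂ (𝟙 (F.map pm)) (σ ≫ (r ◁ τ')) := by
    apply P.isLift₂_intro (σ ≫ (r ◁ τ')) rfl hrq'.symm
    rw [P.map₂_comp, P.map₂_whiskerLeft, hτeq, hβdef,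
      whiskerLeft_congr_hom' hmr, Bicategory.whiskerLeft_comp, Bicategory.whiskerLeft_comp, Bicategory.whiskerLeft_comp,
      Bicategory.whiskerLeft_eqToHom, Bicategory.whiskerLeft_eqToHom,
      Bicategory.whiskerLeft_eqToHom, whiskerLeft_whiskerLeft_eqToHom' e]
    simp
    rfl
  have hkey : r ≫ q' = pm := by
    have e1 := hzuniq ⟨pm, 𝟙 pm⟩ lift_id
    have e2 := hzuniq ⟨r ≫ q', σ ≫ (r ◁ τ')⟩ lift_cand
    exact congrArg Sigma.fst (e2.trans e1.symm)
  -- construct the inverse s via strong cartesianness of pm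
  obtain ⟨s, ⟨hs_lift, hs_fac⟩, -⟩ :=
    IsStronglyCartesian.universal_property F (F.map pm) pm (eqToHom e.symm) (F.map q') hq' q'
  haveI := hs_lift
  have hms : F.map s = eqToHom e.symm := by
    rw [IsHomLift.fac' F (eqToHom e.symm) s]; simp
  haveI hrlift : F.IsHomLift (eqToHom e) r := by rw [← hmr]; infer_instance
  haveI hrs_lift : F.IsHomLift (𝟙 (F.obj P₀)) (r ≫ s) := by
    have := IsHomLift.comp (p := F) (f := eqToHom e) (g := eqToHom e.symm) (φ := r) (ψ := s)
    rwa [eqToHom_trans, eqToHom_refl] at this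
  have hrs : r ≫ s = 𝟙 P₀ := by
    apply IsStronglyCartesian.ext F (F.map pm) pm (𝟙 (F.obj P₀))
    rw [Category.assoc, hs_fac, hkey, Category.id_comp]
  -- second key equality: s ≫ (r ≫ q) = q, by uniqueness of lifts of 𝟙 over q
  obtain ⟨z2, hz2, hz2uniq⟩ := hP.lift₂ (𝟙 (F.map q)) q inferInstance
  have lift_id2 : P.IsLift₂ (𝟙 (F.map q)) (𝟙 q) := by
    apply P.isLift₂_intro (𝟙 q) rfl rfl
    simp [P.map₂_id]
    rfl
  have hsrq : F.map q = F.map (s ≫ (r ≫ q)) := by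
    rw [F.map_comp, hms, ← hq2]
  have lift_cand2 : P.IsLift₂ (𝟙 (F.map q)) (τ' ≫ eqToHom hs_fac.symm ≫ (s ◁ σ)) := by
    apply P.isLift₂_intro _ rfl hsrq
    rw [P.map₂_comp, P.map₂_comp, P.map₂_eqToHom, P.map₂_whiskerLeft,
      whiskerLeft_congr_hom' hms, hτeq, hβdef]
    simp only [Category.assoc, eqToHom_trans_assoc, eqToHom_refl, Category.id_comp]
    rw [← Category.assoc (eqToHom e.symm ◁ inv (P.map₂ σ))]
    rw [← Bicategory.whiskerLeft_comp]
    simp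
    rfl
  have hsrq_eq : s ≫ (r ≫ q) = q := by
    have e1 := hz2uniq ⟨q, 𝟙 q⟩ lift_id2
    have e2 := hz2uniq ⟨s ≫ (r ≫ q), τ' ≫ eqToHom hs_fac.symm ≫ (s ◁ σ)⟩ lift_cand2
    exact congrArg Sigma.fst (e2.trans e1.symm)
  haveI hsr_lift : F.IsHomLift (eqToHom e.symm) (s ≫ r) := by
    apply IsHomLift.of_fac F _ _ rfl e.symm
    simp [F.map_comp, hms, hmr]
  haveI hid_lift : F.IsHomLift (eqToHom e.symm) (𝟙 Q₀) := by
    apply IsHomLift.of_fac F _ _ rfl e.symm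
    simp
  have hsr : s ≫ r = 𝟙 Q₀ := by
    apply IsStronglyCartesian.ext F (F.map (r ≫ q)) q (eqToHom e.symm)
    rw [Category.assoc, hsrq_eq, Category.id_comp]
  exact ⟨s, hrs, hsr⟩
end

section
/- 2-of-3 for cartesian 1-cells in a 1D2F: given a 1D2F p : C → B, 1-cells p : P → Q over f, q : Q → R over g, r : P → R over h, and a 2-cell σ : r → q∘p lying over an invertible 2-cell α : h → g∘f, if q and r are cartesian then so is p. -/
open CategoryTheory CategoryTheory.Bicategory

open CategoryTheory CategoryTheory.Functor FOHL

namespace FOHL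

variable {C B : Type*} [Bicategory C] [Bicategory.Strict C]
  [Bicategory B] [Bicategory.Strict B] {P : TwoFunctor C B}

lemma isLift₂_iff {R S : B} {u v : R ⟶ S} {θ : u ⟶ v} {a b : C} {f g : a ⟶ b} {η : f ⟶ g} :
    P.IsLift₂ θ η ↔ ∃ (_ : R = P.toFunctor.obj a) (_ : S = P.toFunctor.obj b),
      HEq u (P.toFunctor.map f) ∧ HEq v (P.toFunctor.map g) ∧ HEq θ (P.map₂ η) := by
  constructor
  · rintro ⟨⟩
    exact ⟨rfl, rfl, HEq.rfl, HEq.rfl, HEq.rfl⟩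
  · rintro ⟨rfl, rfl, hu, hv, hθ⟩
    obtain rfl := eq_of_heq hu
    obtain rfl := eq_of_heq hv
    obtain rfl := eq_of_heq hθ
    exact IsTwoCellLiftAux.map η

lemma TwoFunctor.IsLift₂.homLift_dom {R S : B} {u v : R ⟶ S} {θ : u ⟶ v} {a b : C}
    {f g : a ⟶ b} {η : f ⟶ g} (hθ : P.IsLift₂ θ η) : P.toFunctor.IsHomLift u f := by
  obtain ⟨rfl, rfl, hu, -, -⟩ := isLift₂_iff.1 hθ
  obtain rfl := eq_of_heq hu
  infer_instance

lemma TwoFunctor.IsLift₂.homLift_cod {R S : B} {u v : R ⟶ S} {θ : u ⟶ v} {a b : C}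
    {f g : a ⟶ b} {η : f ⟶ g} (hθ : P.IsLift₂ θ η) : P.toFunctor.IsHomLift v g := by
  obtain ⟨rfl, rfl, -, hv, -⟩ := isLift₂_iff.1 hθ
  obtain rfl := eq_of_heq hv
  infer_instance

lemma TwoFunctor.IsLift₂.comp {R S : B} {u v w : R ⟶ S} {θ : u ⟶ v} {θ' : v ⟶ w}
    {a b : C} {f g k : a ⟶ b} {η : f ⟶ g} {η' : g ⟶ k}
    (h1 : P.IsLift₂ θ η) (h2 : P.IsLift₂ θ' η') : P.IsLift₂ (θ ≫ θ') (η ≫ η') := by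
  obtain ⟨rfl, rfl, hu, hv, hθ⟩ := isLift₂_iff.1 h1
  obtain rfl := eq_of_heq hu
  obtain rfl := eq_of_heq hv
  obtain rfl := eq_of_heq hθ
  obtain ⟨-, -, -, hw, hθ'⟩ := isLift₂_iff.1 h2
  obtain rfl := eq_of_heq hw
  obtain rfl := eq_of_heq hθ'
  have : P.map₂ η ≫ P.map₂ η' = P.map₂ (η ≫ η') := (P.map₂_comp η η').symm
  rw [this]
  exact IsTwoCellLiftAux.map _

lemma isLift₂_id {R S : B} {u : R ⟶ S} {a b : C} {f : a ⟶ b}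
    (hf : P.toFunctor.IsHomLift u f) : P.IsLift₂ (𝟙 u) (𝟙 f) := by
  obtain ⟨⟩ := hf
  exact P.map₂_id f ▸ IsTwoCellLiftAux.map (𝟙 f)

lemma isLift₂_whiskerLeft {R' R S : B} {u : R' ⟶ R} {x y : R ⟶ S}
    {T a b : C} {ξ : T ⟶ a} {f g : a ⟶ b} {θ : x ⟶ y} {η : f ⟶ g}
    (hξ : P.toFunctor.IsHomLift u ξ) (hθ : P.IsLift₂ θ η) :
    P.IsLift₂ (u ◁ θ) (ξ ◁ η) := by
  obtain ⟨⟩ := hξ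
  obtain ⟨-, rfl, hx, hy, hθ'⟩ := isLift₂_iff.1 hθ
  obtain rfl := eq_of_heq hx
  obtain rfl := eq_of_heq hy
  obtain rfl := eq_of_heq hθ'
  refine isLift₂_iff.2 ⟨rfl, rfl, heq_of_eq (P.toFunctor.map_comp ξ f).symm,
    heq_of_eq (P.toFunctor.map_comp ξ g).symm, ?_⟩
  rw [P.map₂_whiskerLeft ξ η]
  simp

/-- Cartesianness transfers along a 2-cell lying over an invertible 2-cell of the base. -/
lemma isStronglyCartesian_of_isLift₂ (hP : P.Is1D2F) {A C₀ : B} {P₀ R₀ : C}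
    {h k : A ⟶ C₀} (α : h ⟶ k) [IsIso α] {r s : P₀ ⟶ R₀}
    (hr : P.toFunctor.IsStronglyCartesian h r) {σ : r ⟶ s} (hσ : P.IsLift₂ α σ) :
    P.toFunctor.IsStronglyCartesian k s := by
  haveI := hr
  haveI hs : P.toFunctor.IsHomLift k s := hσ.homLift_cod
  refine ⟨fun {T} u φ' hφ' => ?_⟩
  haveI := hφ'
  -- transport φ' to a lift over u ≫ h using the inverse of α
  obtain ⟨⟨t', τ⟩, hτ, -⟩ := hP.lift₂ (u ◁ inv α) φ' inferInstance
  haveI ht' : P.toFunctor.IsHomLift (u ≫ h) t' := hτ.homLift_cod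
  obtain ⟨ξ, ⟨hξl, hξr⟩, hξuniq⟩ :=
    Functor.IsStronglyCartesian.universal_property' (p := P.toFunctor) (f := h) (φ := r) u t'
  haveI := hξl
  subst hξr
  refine ⟨ξ, ⟨hξl, ?_⟩, ?_⟩
  · -- ξ ≫ s = φ'
    have w : P.IsLift₂ (u ◁ α) (ξ ◁ σ) := isLift₂_whiskerLeft hξl hσ
    have c : P.IsLift₂ ((u ◁ inv α) ≫ (u ◁ α)) (τ ≫ (ξ ◁ σ)) := hτ.comp w
    have hbase : (u ◁ inv α) ≫ (u ◁ α) = 𝟙 (u ≫ k) := by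
      rw [← Bicategory.whiskerLeft_comp, IsIso.inv_hom_id, Bicategory.whiskerLeft_id]
    rw [hbase] at c
    have hid : P.IsLift₂ (𝟙 (u ≫ k)) (𝟙 φ') := isLift₂_id inferInstance
    have e : (⟨ξ ≫ s, τ ≫ (ξ ◁ σ)⟩ : Σ g' : T ⟶ R₀, φ' ⟶ g') = ⟨φ', 𝟙 φ'⟩ :=
      (hP.lift₂ (𝟙 (u ≫ k)) φ' inferInstance).unique c hid
    injection e with e1 e2
  · rintro χ' ⟨hχ'l, hχ'e⟩
    haveI := hχ'l
    subst hχ'e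
    have w' : P.IsLift₂ (u ◁ α) (χ' ◁ σ) := isLift₂_whiskerLeft hχ'l hσ
    have c : P.IsLift₂ ((u ◁ α) ≫ (u ◁ inv α)) ((χ' ◁ σ) ≫ τ) := w'.comp hτ
    have hbase : (u ◁ α) ≫ (u ◁ inv α) = 𝟙 (u ≫ h) := by
      rw [← Bicategory.whiskerLeft_comp, IsIso.hom_inv_id, Bicategory.whiskerLeft_id]
    rw [hbase] at c
    haveI : P.toFunctor.IsHomLift (u ≫ h) (χ' ≫ r) := inferInstance
    have hid : P.IsLift₂ (𝟙 (u ≫ h)) (𝟙 (χ' ≫ r)) := isLift₂_id inferInstance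
    have e : (⟨ξ ≫ r, (χ' ◁ σ) ≫ τ⟩ : Σ g' : T ⟶ R₀, (χ' ≫ r) ⟶ g') = ⟨χ' ≫ r, 𝟙 (χ' ≫ r)⟩ :=
      (hP.lift₂ (𝟙 (u ≫ h)) (χ' ≫ r) inferInstance).unique c hid
    injection e with e1 e2
    exact hξuniq χ' ⟨hχ'l, e1.symm⟩

end FOHL


/-- 2-of-3 for cartesian 1-cells in a 1D2F. Given a 1D2F `P : C ⥤ B`,
1-cells `pm : P₀ ⟶ Q₀` over `f`, `q : Q₀ ⟶ R₀` over `g`, `r : P₀ ⟶ R₀` over `h`, and a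
2-cell `σ : r ⟶ pm ≫ q` lying over an invertible 2-cell `α : h ⟶ g ∘ f`, if `q` and `r`
are cartesian then so is `pm`. -/
theorem oneD2F_cartesian_two_of_three
    {C B : Type*} [Bicategory C] [Bicategory.Strict C] [Bicategory B] [Bicategory.Strict B]
    (P : TwoFunctor C B) (hP : P.Is1D2F)
    {A B₀ C₀ : B} {P₀ Q₀ R₀ : C}
    (f : A ⟶ B₀) (g : B₀ ⟶ C₀) (h : A ⟶ C₀) (α : h ⟶ f ≫ g) (hα : IsIso α)
    (pm : P₀ ⟶ Q₀) (hpm : P.toFunctor.IsHomLift f pm)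
    (q : Q₀ ⟶ R₀) (hq : P.toFunctor.IsStronglyCartesian g q)
    (r : P₀ ⟶ R₀) (hr : P.toFunctor.IsStronglyCartesian h r)
    (σ : r ⟶ pm ≫ q) (hσ : P.IsLift₂ α σ) :
    P.toFunctor.IsStronglyCartesian f pm := by
  haveI := hq
  haveI := hpm
  haveI : IsIso α := hα
  haveI : P.toFunctor.IsStronglyCartesian (f ≫ g) (pm ≫ q) :=
    isStronglyCartesian_of_isLift₂ hP α hr hσ
  exact Functor.IsStronglyCartesian.of_comp (p := P.toFunctor) (f := f) (g := g)
    (φ := pm) (ψ := q)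
end

section
/- In any 1-discrete 2-fibration, every cartesian lift of an equivalence 1-cell in the base is itself an equivalence 1-cell in the total 2-category. -/
open CategoryTheory CategoryTheory.Bicategory

open CategoryTheory CategoryTheory.Functor FOHL

section Helpers

open CategoryTheory CategoryTheory.Functor FOHL

variable {C B : Type*} [Bicategory C] [Bicategory.Strict C] [Bicategory B] [Bicategory.Strict B]
  (P : TwoFunctor C B)

lemma FOHL.eqToHom_self {X : Type*} [Category X] {x : X} (h : x = x) : eqToHom h = 𝟙 x := rfl

lemma FOHL.isLift₂_elim {R S : B} {u v : R ⟶ S} {θ : u ⟶ v} {a b : C} {f g : a ⟶ b} {η : f ⟶ g}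
    (h : P.IsLift₂ θ η) :
    ∃ (_ : P.toFunctor.obj a = R) (_ : P.toFunctor.obj b = S),
      HEq (P.toFunctor.map f) u ∧ HEq (P.toFunctor.map g) v ∧ HEq (P.map₂ η) θ := by
  cases h; exact ⟨rfl, rfl, HEq.rfl, HEq.rfl, HEq.rfl⟩

lemma FOHL.isLift₂_elim' {a b : C} {f g : a ⟶ b} {η : f ⟶ g}
    {u v : P.toFunctor.obj a ⟶ P.toFunctor.obj b} {θ : u ⟶ v}
    (h : P.IsLift₂ θ η) :
    ∃ (hu : P.toFunctor.map f = u) (hv : P.toFunctor.map g = v),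
      P.map₂ η = eqToHom hu ≫ θ ≫ eqToHom hv.symm := by
  obtain ⟨-, -, h1, h2, h3⟩ := FOHL.isLift₂_elim P h
  have hu : P.toFunctor.map f = u := eq_of_heq h1
  have hv : P.toFunctor.map g = v := eq_of_heq h2
  subst hu; subst hv
  exact ⟨rfl, rfl, by simpa using eq_of_heq h3⟩

lemma FOHL.isLift₂_intro {a b : C} {f g : a ⟶ b} (η : f ⟶ g)
    {u v : P.toFunctor.obj a ⟶ P.toFunctor.obj b} {θ : u ⟶ v}
    (hu : P.toFunctor.map f = u) (hv : P.toFunctor.map g = v)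
    (hθ : P.map₂ η = eqToHom hu ≫ θ ≫ eqToHom hv.symm) : P.IsLift₂ θ η := by
  subst hu; subst hv
  simp only [FOHL.eqToHom_self, Category.comp_id, Category.id_comp] at hθ
  subst hθ
  exact IsTwoCellLiftAux.map η

lemma FOHL.map₂_eqToHom {a b : C} {f g : a ⟶ b} (h : f = g) :
    P.map₂ (eqToHom h) = eqToHom (congrArg P.toFunctor.map h) := by
  subst h; simpa using P.map₂_id f

/-- Lifting an isomorphism of 1-cells in the base along a given source 1-cell upstairs:
yields an isomorphic 1-cell upstairs over the target. -/
lemma FOHL.lift_iso (hP : P.Is1D2F) {a b : C} (m : a ⟶ b)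
    {u' : P.toFunctor.obj a ⟶ P.toFunctor.obj b} (e : P.toFunctor.map m ≅ u') :
    ∃ (n : a ⟶ b) (hn : P.toFunctor.map n = u') (θ : m ≅ n),
      P.map₂ θ.hom = e.hom ≫ eqToHom hn.symm := by
  obtain ⟨⟨n, δ⟩, hδ, -⟩ := hP.lift₂ e.hom m inferInstance
  dsimp only at hδ
  obtain ⟨hu, hn, hδeq⟩ := FOHL.isLift₂_elim' P hδ
  rw [FOHL.eqToHom_self, Category.id_comp] at hδeq
  obtain ⟨⟨n₂, δ₂⟩, hδ₂, -⟩ := hP.lift₂ (eqToHom hn ≫ e.inv) n inferInstance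
  dsimp only at hδ₂
  obtain ⟨hu₂, hn₂, hδ₂eq⟩ := FOHL.isLift₂_elim' P hδ₂
  rw [FOHL.eqToHom_self, Category.id_comp] at hδ₂eq
  -- first composite is the identity
  obtain ⟨cc, -, hccu⟩ := hP.lift₂ (𝟙 (P.toFunctor.map m)) m inferInstance
  have h1 : (⟨m, 𝟙 m⟩ : Σ g' : a ⟶ b, m ⟶ g') = cc :=
    hccu _ (FOHL.isLift₂_intro P _ rfl rfl (by simp [P.map₂_id, FOHL.eqToHom_self]))
  have h2 : (⟨n₂, δ ≫ δ₂⟩ : Σ g' : a ⟶ b, m ⟶ g') = cc :=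
    hccu _ (FOHL.isLift₂_intro P _ rfl hn₂
      (by rw [P.map₂_comp, hδeq, hδ₂eq]; simp [FOHL.eqToHom_self]))
  have h12 := h2.trans h1.symm
  have hn₂m : m = n₂ := (congrArg Sigma.fst h12).symm
  subst hn₂m
  have hδδ₂' : δ ≫ δ₂ = 𝟙 m := by simpa using h12
  -- second composite is the identity
  obtain ⟨cc', -, hccu'⟩ := hP.lift₂ (𝟙 (P.toFunctor.map n)) n inferInstance
  have h3 : (⟨n, 𝟙 n⟩ : Σ g' : a ⟶ b, n ⟶ g') = cc' :=
    hccu' _ (FOHL.isLift₂_intro P _ rfl rfl (by simp [P.map₂_id, FOHL.eqToHom_self]))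
  have h4 : (⟨n, δ₂ ≫ δ⟩ : Σ g' : a ⟶ b, n ⟶ g') = cc' :=
    hccu' _ (FOHL.isLift₂_intro P _ rfl rfl
      (by rw [P.map₂_comp, hδeq, hδ₂eq]; simp [FOHL.eqToHom_self]))
  have hδ₂δ' : δ₂ ≫ δ = 𝟙 n := by
    have := h4.trans h3.symm
    simpa using this
  exact ⟨n, hn, ⟨δ, δ₂, hδδ₂', hδ₂δ'⟩, hδeq⟩

end Helpers


/-- In any 1-discrete 2-fibration, every cartesian lift of an equivalence
1-cell in the base is itself an equivalence 1-cell in the total 2-category. -/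
theorem oneD2F_cartesian_lift_of_equivalence_isEquivalence
    {C B : Type*} [Bicategory C] [Bicategory.Strict C] [Bicategory B] [Bicategory.Strict B]
    (P : TwoFunctor C B) (hP : P.Is1D2F)
    {A B₀ : B} (f : A ⟶ B₀) (hf : IsEquivalenceOneCell f)
    {X Y : C} (φ : X ⟶ Y) (hφ : P.toFunctor.IsStronglyCartesian f φ) :
    IsEquivalenceOneCell φ := by
  haveI := hφ
  obtain ⟨g, ⟨η⟩, ⟨ε₀⟩⟩ := hf
  have hX : P.toFunctor.obj X = A := IsHomLift.domain_eq P.toFunctor f φ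
  have hY : P.toFunctor.obj Y = B₀ := IsHomLift.codomain_eq P.toFunctor f φ
  subst hX; subst hY
  have hfeq : f = P.toFunctor.map φ := by
    simpa [FOHL.eqToHom_self] using IsHomLift.fac P.toFunctor f φ
  subst hfeq
  -- upgrade to an adjoint equivalence
  set q := P.toFunctor.map φ with hqdef
  let εa : g ≫ q ≅ 𝟙 (P.toFunctor.obj Y) := adjointifyCounit η ε₀.symm
  have tri := adjointifyCounit_left_triangle η ε₀.symm
  have t1 : η.hom ▷ q ≫ eqToHom (Category.assoc q g q) ≫ (q ◁ εa.hom)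
      = eqToHom (by simp : 𝟙 (P.toFunctor.obj X) ≫ q = q ≫ 𝟙 (P.toFunctor.obj Y)) := by
    have h := congrArg Iso.hom tri
    rw [leftZigzagIso_hom] at h
    simpa [Bicategory.leftZigzag, bicategoricalComp,
      Bicategory.Strict.associator_eqToIso, Bicategory.Strict.leftUnitor_eqToIso,
      Bicategory.Strict.rightUnitor_eqToIso, FOHL.eqToHom_self] using h
  have t2 : q ◁ εa.inv =
      eqToHom (by simp : q ≫ 𝟙 (P.toFunctor.obj Y) = 𝟙 (P.toFunctor.obj X) ≫ q) ≫
        η.hom ▷ q ≫ eqToHom (Category.assoc q g q) := by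
    rw [← cancel_mono ((whiskerLeftIso q εa).hom)]
    simp only [Bicategory.whiskerLeftIso_hom, Category.assoc]
    rw [t1]
    simp [← Bicategory.whiskerLeft_comp, FOHL.eqToHom_self]
  -- lift the unit and counit isomorphisms
  obtain ⟨w, hw, δ, hδm⟩ := FOHL.lift_iso P hP (𝟙 Y) (eqToIso (P.toFunctor.map_id Y) ≪≫ εa.symm)
  obtain ⟨v, hv, γ, hγm⟩ := FOHL.lift_iso P hP (𝟙 X) (eqToIso (P.toFunctor.map_id X) ≪≫ η)
  -- factor w through the cartesian φ
  haveI hwlift : P.toFunctor.IsHomLift (g ≫ q) w := by rw [← hw]; infer_instance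
  let ψ : Y ⟶ X := IsStronglyCartesian.map P.toFunctor q φ (g := g) (f' := g ≫ q) rfl w
  have hfacψ : ψ ≫ φ = w := IsStronglyCartesian.fac P.toFunctor q φ (g := g) (f' := g ≫ q) rfl w
  haveI hψg : P.toFunctor.IsHomLift g ψ := inferInstance
  have hgψ : P.toFunctor.map ψ = g := (IsHomLift.eq_of_isHomLift P.toFunctor g ψ).symm
  -- compare the two lifts of the unit whiskered with φ
  have s1 : (𝟙 X ≫ φ) = (φ ≫ 𝟙 Y) := by simp
  have s2 : (φ ≫ w) = (φ ≫ ψ) ≫ φ := by rw [← hfacψ, Category.assoc]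
  have c1 : P.toFunctor.map (𝟙 X ≫ φ) = 𝟙 (P.toFunctor.obj X) ≫ q := by simp [hqdef]
  have hv₁ : P.toFunctor.map (v ≫ φ) = (q ≫ g) ≫ q := by
    rw [P.toFunctor.map_comp, hv]
  have hv₂ : P.toFunctor.map ((φ ≫ ψ) ≫ φ) = (q ≫ g) ≫ q := by
    rw [P.toFunctor.map_comp, P.toFunctor.map_comp, hgψ]
  have lift1 : P.IsLift₂ (eqToHom c1 ≫ η.hom ▷ q) (γ.hom ▷ φ) := by
    refine FOHL.isLift₂_intro P _ rfl hv₁ ?_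
    rw [P.map₂_whiskerRight, hγm]
    simp [Bicategory.comp_whiskerRight, FOHL.eqToHom_self]
    rfl
  have lift2 : P.IsLift₂ (eqToHom c1 ≫ η.hom ▷ q)
      (eqToHom s1 ≫ (φ ◁ δ.hom) ≫ eqToHom s2) := by
    refine FOHL.isLift₂_intro P _ rfl hv₂ ?_
    rw [P.map₂_comp, P.map₂_comp, P.map₂_whiskerLeft, FOHL.map₂_eqToHom, FOHL.map₂_eqToHom, hδm]
    simp only [Iso.trans_hom, eqToIso.hom, Iso.symm_hom, Bicategory.whiskerLeft_comp,
      Bicategory.whiskerLeft_eqToHom, Category.assoc]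
    rw [t2]
    simp [FOHL.eqToHom_self]
  obtain ⟨cc, -, hccu⟩ := hP.lift₂ (eqToHom c1 ≫ η.hom ▷ q) (𝟙 X ≫ φ) inferInstance
  have h1 := hccu ⟨v ≫ φ, γ.hom ▷ φ⟩ lift1
  have h2 := hccu ⟨(φ ≫ ψ) ≫ φ, eqToHom s1 ≫ (φ ◁ δ.hom) ≫ eqToHom s2⟩ lift2
  have hvψφ : v ≫ φ = (φ ≫ ψ) ≫ φ := congrArg Sigma.fst (h1.trans h2.symm)
  haveI hvlift : P.toFunctor.IsHomLift (q ≫ g) v := by rw [← hv]; infer_instance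
  haveI : P.toFunctor.IsHomLift (q ≫ g) (φ ≫ ψ) := by
    have : P.toFunctor.map (φ ≫ ψ) = q ≫ g := by rw [P.toFunctor.map_comp, hgψ]
    rw [← this]; infer_instance
  have hveq : v = φ ≫ ψ := IsStronglyCartesian.ext P.toFunctor q φ (q ≫ g) hvψφ
  exact ⟨ψ, ⟨γ ≪≫ eqToIso hveq⟩, ⟨δ ≪≫ eqToIso hfacψ.symm⟩⟩
end
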